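/- Let s > 2 be an integer and S⁻ = { x : x = ∑_{n=1}^∞ (-1)^n α_n / s^{α_1+...+α_n}, α_n ∈ {1,...,s-1} }. Then inf S⁻ = (−s^{s−1} + s − 1)/(s^s − 1) and sup S⁻ = (−s² + s + 1)/(s^s − 1). -/

import Mathlib

open Finset Filter Topology

namespace Stmt10

/-- The series value for digit sequence `α`. -/
noncomputable def F (s : ℕ) (α : ℕ → ℕ) : ℝ :=
  ∑' n : ℕ, (-1 : ℝ) ^ (n + 1) * (α n : ℝ) / (s : ℝ) ^ (∑ k ∈ Finset.range (n + 1), α k)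

def Adm (s : ℕ) (α : ℕ → ℕ) : Prop := ∀ n, 1 ≤ α n ∧ α n ≤ s - 1

variable {s : ℕ} {α : ℕ → ℕ}

lemma hs_pos (hs : 2 < s) : (0:ℝ) < s := by positivity

lemma sum_ge (hα : Adm s α) (n : ℕ) : n + 1 ≤ ∑ k ∈ Finset.range (n + 1), α k := by
  calc n + 1 = ∑ _k ∈ Finset.range (n+1), 1 := by simp
  _ ≤ ∑ k ∈ Finset.range (n + 1), α k := Finset.sum_le_sum fun i _ => (hα i).1

lemma term_abs_le (hs : 2 < s) (hα : Adm s α) (n : ℕ) :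
    |(-1 : ℝ) ^ (n + 1) * (α n : ℝ) / (s : ℝ) ^ (∑ k ∈ Finset.range (n + 1), α k)|
      ≤ ((s:ℝ) - 1)/s * (1/s) ^ n := by
  have hs0 : (0:ℝ) < s := hs_pos hs
  have h1 : (1:ℝ) ≤ s := by exact_mod_cast (by omega : 1 ≤ s)
  have hpow : (s:ℝ) ^ (n+1) ≤ (s:ℝ) ^ (∑ k ∈ Finset.range (n + 1), α k) :=
    pow_le_pow_right₀ h1 (sum_ge hα n)
  have hA : (0:ℝ) < (s:ℝ) ^ (∑ k ∈ Finset.range (n + 1), α k) := by positivity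
  rw [abs_div, abs_mul, abs_pow, abs_neg, abs_one, one_pow, one_mul, abs_of_nonneg hA.le,
    abs_of_nonneg (by positivity : (0:ℝ) ≤ (α n : ℝ))]
  have hnum : (α n : ℝ) ≤ (s:ℝ) - 1 := by
    have := (hα n).2
    have : (α n : ℝ) ≤ ((s - 1 : ℕ) : ℝ) := by exact_mod_cast this
    calc (α n : ℝ) ≤ ((s - 1 : ℕ) : ℝ) := this
    _ = (s:ℝ) - 1 := by
      have : 1 ≤ s := by omega
      push_cast [Nat.cast_sub this]; ring
  calc (α n : ℝ) / (s:ℝ) ^ (∑ k ∈ Finset.range (n + 1), α k)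
      ≤ ((s:ℝ) - 1) / (s:ℝ) ^ (n+1) := by
        apply div_le_div₀ (by linarith) hnum (by positivity) hpow
  _ = ((s:ℝ) - 1)/s * (1/s) ^ n := by
      field_simp [pow_succ]
      rw [one_div_pow, pow_succ]; field_simp

lemma summable_bound (hs : 2 < s) :
    Summable (fun n : ℕ => ((s:ℝ) - 1)/s * (1/s) ^ n) := by
  apply Summable.mul_left
  apply summable_geometric_of_lt_one (by positivity)
  rw [div_lt_one (hs_pos hs)]
  exact_mod_cast (by omega : 1 < s)

lemma summable_term (hs : 2 < s) (hα : Adm s α) :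
    Summable (fun n : ℕ =>
      (-1 : ℝ) ^ (n + 1) * (α n : ℝ) / (s : ℝ) ^ (∑ k ∈ Finset.range (n + 1), α k)) := by
  apply Summable.of_abs
  exact Summable.of_nonneg_of_le (fun n => abs_nonneg _) (term_abs_le hs hα) (summable_bound hs)

lemma tsum_bound (hs : 2 < s) :
    ∑' n : ℕ, ((s:ℝ) - 1)/s * (1/s) ^ n = 1 := by
  have h1 : (1:ℝ) < s := by exact_mod_cast (by omega : 1 < s)
  have hne : (s:ℝ) - 1 ≠ 0 := by linarith
  rw [tsum_mul_left, tsum_geometric_of_lt_one (by positivity) (by rw [div_lt_one (by linarith)]; linarith)]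
  field_simp

lemma F_abs_le_one (hs : 2 < s) (hα : Adm s α) : |F s α| ≤ 1 := by
  have h := norm_tsum_le_tsum_norm (f := fun n : ℕ =>
      (-1 : ℝ) ^ (n + 1) * (α n : ℝ) / (s : ℝ) ^ (∑ k ∈ Finset.range (n + 1), α k))
    (Summable.of_nonneg_of_le (fun n => norm_nonneg _)
      (fun n => by rw [Real.norm_eq_abs]; exact term_abs_le hs hα n) (summable_bound hs))
  rw [Real.norm_eq_abs] at h
  calc |F s α| ≤ _ := h
  _ ≤ ∑' n : ℕ, ((s:ℝ) - 1)/s * (1/s) ^ n := by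
      apply Summable.tsum_le_tsum (fun n => by rw [Real.norm_eq_abs]; exact term_abs_le hs hα n)
      · exact Summable.of_nonneg_of_le (fun n => norm_nonneg _)
          (fun n => by rw [Real.norm_eq_abs]; exact term_abs_le hs hα n) (summable_bound hs)
      · exact summable_bound hs
  _ = 1 := tsum_bound hs

lemma F_rec (hs : 2 < s) (hα : Adm s α) :
    F s α = -(α 0 : ℝ) / (s:ℝ) ^ (α 0) - (1 / (s:ℝ) ^ (α 0)) * F s (fun n => α (n + 1)) := by
  have hsum := summable_term hs hα
  rw [F, hsum.tsum_eq_zero_add]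
  have h0 : (-1 : ℝ) ^ (0 + 1) * (α 0 : ℝ) / (s : ℝ) ^ (∑ k ∈ Finset.range (0 + 1), α k)
      = -(α 0 : ℝ) / (s:ℝ) ^ (α 0) := by
    simp
  rw [h0]
  have hstep : ∀ n : ℕ,
      (-1 : ℝ) ^ (n + 1 + 1) * (α (n+1) : ℝ) / (s : ℝ) ^ (∑ k ∈ Finset.range (n + 1 + 1), α k)
      = (-(1 / (s:ℝ) ^ (α 0))) *
        ((-1 : ℝ) ^ (n + 1) * (α (n+1) : ℝ) / (s : ℝ) ^ (∑ k ∈ Finset.range (n + 1), α (k+1))) := by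
    intro n
    have hA : ∑ k ∈ Finset.range (n + 1 + 1), α k
        = (∑ k ∈ Finset.range (n + 1), α (k+1)) + α 0 := Finset.sum_range_succ' α (n+1)
    rw [hA, pow_add (s:ℝ), pow_succ (-1:ℝ) (n+1)]
    have h1 : ((s:ℝ)) ^ (∑ k ∈ Finset.range (n + 1), α (k+1)) ≠ 0 := by positivity
    have h2 : ((s:ℝ)) ^ (α 0) ≠ 0 := by positivity
    field_simp
  rw [tsum_congr hstep, tsum_mul_left]
  rw [F]
  ring


noncomputable def L (s : ℕ) : ℝ := (-(s:ℝ) ^ (s-1) + s - 1) / ((s:ℝ) ^ s - 1)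
noncomputable def U (s : ℕ) : ℝ := (-(s:ℝ) ^ 2 + s + 1) / ((s:ℝ) ^ s - 1)

variable {s : ℕ}

lemma hsR (hs : 2 < s) : (3:ℝ) ≤ s := by exact_mod_cast (by omega : 3 ≤ s)

lemma hD (hs : 2 < s) : (0:ℝ) < (s:ℝ) ^ s - 1 := by
  have h1 : (1:ℝ) < s := by exact_mod_cast (by omega : 1 < s)
  have : (1:ℝ) < (s:ℝ) ^ s := one_lt_pow₀ h1 (by omega)
  linarith

lemma e1 (hs : 2 < s) : (s:ℝ) ^ s = (s:ℝ) ^ (s-1) * s := by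
  rw [← pow_succ]; congr 1; omega

lemma e2 (hs : 2 < s) : (s:ℝ) ^ s = (s:ℝ) ^ (s-2) * (s:ℝ)^2 := by
  rw [← pow_add]; congr 1; omega

lemma e3 (hs : 2 < s) : (s:ℝ) ^ (s-1) = (s:ℝ) ^ (s-2) * s := by
  rw [← pow_succ]; congr 1; omega

lemma hLD (hs : 2 < s) : L s * ((s:ℝ) ^ s - 1) = -(s:ℝ) ^ (s-1) + s - 1 :=
  div_mul_cancel₀ _ (hD hs).ne'

lemma hUD (hs : 2 < s) : U s * ((s:ℝ) ^ s - 1) = -(s:ℝ) ^ 2 + s + 1 :=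
  div_mul_cancel₀ _ (hD hs).ne'

lemma hL0 (hs : 2 < s) : L s ≤ 0 := by
  apply div_nonpos_of_nonpos_of_nonneg _ (hD hs).le
  have h1 : (1:ℝ) ≤ s := by exact_mod_cast (by omega : 1 ≤ s)
  have : (s:ℝ) ^ 1 ≤ (s:ℝ) ^ (s-1) := pow_le_pow_right₀ h1 (by omega)
  rw [pow_one] at this
  linarith

lemma hU0 (hs : 2 < s) : U s ≤ 0 := by
  apply div_nonpos_of_nonpos_of_nonneg _ (hD hs).le
  have := hsR hs
  nlinarith

lemma hLm1 (hs : 2 < s) : -1 ≤ L s := by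
  rw [L, le_div_iff₀ (hD hs)]
  have h1 : (1:ℝ) ≤ s := by linarith [hsR hs]
  have : (s:ℝ) ^ (s-1) ≤ (s:ℝ) ^ s := pow_le_pow_right₀ h1 (by omega)
  nlinarith [hsR hs]

lemma hUm1 (hs : 2 < s) : -1 ≤ U s := by
  rw [U, le_div_iff₀ (hD hs)]
  have h1 : (1:ℝ) ≤ s := by linarith [hsR hs]
  have : (s:ℝ) ^ 2 ≤ (s:ℝ) ^ s := pow_le_pow_right₀ h1 (by omega)
  nlinarith [hsR hs]

lemma ineq1 (hs : 2 < s) {a : ℕ} (ha1 : 1 ≤ a) (ha2 : a ≤ s - 1) :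
    (a:ℝ) + U s + L s * (s:ℝ) ^ a ≤ 0 := by
  have hd := hD hs
  have hld := hLD hs
  have hud := hUD hs
  have he1 := e1 hs
  have h1 : (1:ℝ) ≤ s := by linarith [hsR hs]
  rcases eq_or_lt_of_le ha1 with h | h
  · -- a = 1
    have ha : a = 1 := h.symm
    subst ha
    have key : ((1:ℝ) + U s + L s * (s:ℝ) ^ 1) * ((s:ℝ) ^ s - 1) = 0 := by
      have expand : ((1:ℝ) + U s + L s * (s:ℝ) ^ 1) * ((s:ℝ) ^ s - 1)
          = ((s:ℝ) ^ s - 1) + U s * ((s:ℝ) ^ s - 1) + (L s * ((s:ℝ) ^ s - 1)) * (s:ℝ) := by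
        ring
      rw [expand, hld, hud, he1]; ring
    by_contra hcon
    push_neg at hcon
    push_cast at hcon
    nlinarith
  · -- 2 ≤ a
    have h2a : 2 ≤ a := h
    have hpa : (s:ℝ) ^ 2 ≤ (s:ℝ) ^ a := pow_le_pow_right₀ h1 h2a
    have hmul : L s * (s:ℝ) ^ a ≤ L s * (s:ℝ) ^ 2 := mul_le_mul_of_nonpos_left hpa (hL0 hs)
    have haR : (a:ℝ) ≤ (s:ℝ) - 1 := by
      have : (a:ℝ) ≤ ((s-1:ℕ):ℝ) := by exact_mod_cast ha2
      have h1' : 1 ≤ s := by omega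
      rw [Nat.cast_sub h1'] at this
      simpa using this
    have key : (((s:ℝ) - 1) + U s + L s * (s:ℝ) ^ 2) * ((s:ℝ) ^ s - 1)
        = -(s:ℝ) ^ s + (s:ℝ)^3 - 2*(s:ℝ)^2 + 2 := by
      have expand : (((s:ℝ) - 1) + U s + L s * (s:ℝ) ^ 2) * ((s:ℝ) ^ s - 1)
          = ((s:ℝ) - 1) * ((s:ℝ) ^ s - 1) + U s * ((s:ℝ) ^ s - 1)
            + (L s * ((s:ℝ) ^ s - 1)) * (s:ℝ)^2 := by ring
      rw [expand, hld, hud, he1]; ring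
    have h3 : (s:ℝ)^3 ≤ (s:ℝ)^s := pow_le_pow_right₀ h1 (by omega)
    have hkey2 : (((s:ℝ) - 1) + U s + L s * (s:ℝ) ^ 2) * ((s:ℝ) ^ s - 1) ≤ 0 := by
      rw [key]; nlinarith [hsR hs]
    have hmain : ((s:ℝ) - 1) + U s + L s * (s:ℝ) ^ 2 ≤ 0 := by
      by_contra hcon
      push_neg at hcon
      nlinarith
    linarith

lemma ineq2 (hs : 2 < s) {a : ℕ} (ha1 : 1 ≤ a) (ha2 : a ≤ s - 1) :
    0 ≤ (a:ℝ) + L s + U s * (s:ℝ) ^ a := by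
  have hd := hD hs
  have hld := hLD hs
  have hud := hUD hs
  have he1 := e1 hs
  have he2 := e2 hs
  have he3 := e3 hs
  have h1 : (1:ℝ) ≤ s := by linarith [hsR hs]
  rcases eq_or_lt_of_le ha2 with h | h
  · -- a = s - 1
    subst h
    have hcast : (((s-1:ℕ)):ℝ) = (s:ℝ) - 1 := by
      have h1' : 1 ≤ s := by omega
      push_cast [Nat.cast_sub h1']; ring
    rw [hcast]
    have key : (((s:ℝ) - 1) + L s + U s * (s:ℝ) ^ (s-1)) * ((s:ℝ) ^ s - 1) = 0 := by
      have expand : (((s:ℝ) - 1) + L s + U s * (s:ℝ) ^ (s-1)) * ((s:ℝ) ^ s - 1)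
          = ((s:ℝ) - 1) * ((s:ℝ) ^ s - 1) + L s * ((s:ℝ) ^ s - 1)
            + (U s * ((s:ℝ) ^ s - 1)) * (s:ℝ)^(s-1) := by ring
      rw [expand, hld, hud, he1]; ring
    by_contra hcon
    push_neg at hcon
    nlinarith
  · -- a ≤ s - 2
    have h2a : a ≤ s - 2 := by omega
    have hpa : (s:ℝ) ^ a ≤ (s:ℝ) ^ (s-2) := pow_le_pow_right₀ h1 h2a
    have hmul : U s * (s:ℝ) ^ (s-2) ≤ U s * (s:ℝ) ^ a := mul_le_mul_of_nonpos_left hpa (hU0 hs)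
    have haR : (1:ℝ) ≤ (a:ℝ) := by exact_mod_cast ha1
    have key : ((1:ℝ) + L s + U s * (s:ℝ) ^ (s-2)) * ((s:ℝ) ^ s - 1)
        = (s:ℝ)^(s-2) + (s:ℝ) - 2 := by
      have expand : ((1:ℝ) + L s + U s * (s:ℝ) ^ (s-2)) * ((s:ℝ) ^ s - 1)
          = ((s:ℝ) ^ s - 1) + L s * ((s:ℝ) ^ s - 1)
            + (U s * ((s:ℝ) ^ s - 1)) * (s:ℝ)^(s-2) := by ring
      rw [expand, hld, hud, he2, he3]; ring
    have hY : (0:ℝ) < (s:ℝ)^(s-2) := by positivity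
    have hkey2 : (0:ℝ) ≤ ((1:ℝ) + L s + U s * (s:ℝ) ^ (s-2)) * ((s:ℝ) ^ s - 1) := by
      rw [key]; nlinarith [hsR hs]
    have hmain : (0:ℝ) ≤ (1:ℝ) + L s + U s * (s:ℝ) ^ (s-2) := by
      by_contra hcon
      push_neg at hcon
      nlinarith
    linarith


lemma bounds_aux (hs : 2 < s) : ∀ N : ℕ, ∀ α : ℕ → ℕ, Adm s α →
    L s - 2*(1/(s:ℝ))^N ≤ F s α ∧ F s α ≤ U s + 2*(1/(s:ℝ))^N := by
  intro N
  induction N with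
  | zero =>
    intro α hα
    have h := F_abs_le_one hs hα
    rw [abs_le] at h
    have h1 := hLm1 hs
    have h2 := hUm1 hs
    have h3 := hL0 hs
    have h4 := hU0 hs
    constructor <;> · simp only [pow_zero, mul_one]; linarith [h.1, h.2]
  | succ N ih =>
    intro α hα
    have hα' : Adm s (fun n => α (n+1)) := fun n => hα (n+1)
    have hrec := F_rec hs hα
    obtain ⟨ih1, ih2⟩ := ih _ hα'
    have h1 : (1:ℝ) ≤ s := by linarith [hsR hs]
    have hP : (0:ℝ) < (s:ℝ) ^ (α 0) := by positivity
    have hsP : (s:ℝ) ≤ (s:ℝ) ^ (α 0) := by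
      have := pow_le_pow_right₀ h1 (hα 0).1
      simpa using this
    have hq : (0:ℝ) < (1/(s:ℝ))^N := by positivity
    have hqs : 2*(1/(s:ℝ))^N / (s:ℝ)^(α 0) ≤ 2*(1/(s:ℝ))^(N+1) := by
      have hs0 : (0:ℝ) < s := by linarith
      have h' : 2*(1/(s:ℝ))^N / (s:ℝ)^(α 0) ≤ 2*(1/(s:ℝ))^N / (s:ℝ) :=
        div_le_div_of_nonneg_left (by positivity) hs0 hsP
      have he : 2*(1/(s:ℝ))^N / (s:ℝ) = 2*(1/(s:ℝ))^(N+1) := by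
        rw [pow_succ]; field_simp
      linarith [he ▸ h']
    constructor
    · -- lower bound
      have key := ineq1 hs (hα 0).1 (hα 0).2
      have stepA : L s ≤ (-(α 0 : ℝ) - U s) / (s:ℝ) ^ (α 0) := by
        rw [le_div_iff₀ hP]; linarith
      have hmono : (1/(s:ℝ)^(α 0)) * F s (fun n => α (n+1))
          ≤ (1/(s:ℝ)^(α 0)) * (U s + 2*(1/(s:ℝ))^N) :=
        mul_le_mul_of_nonneg_left ih2 (by positivity)
      have e : -(α 0 : ℝ)/(s:ℝ)^(α 0) - (1/(s:ℝ)^(α 0)) * (U s + 2*(1/(s:ℝ))^N)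
          = (-(α 0 : ℝ) - U s)/(s:ℝ)^(α 0) - 2*(1/(s:ℝ))^N / (s:ℝ)^(α 0) := by
        ring
      rw [hrec]
      linarith
    · -- upper bound
      have key := ineq2 hs (hα 0).1 (hα 0).2
      have stepA : (-(α 0 : ℝ) - L s) / (s:ℝ) ^ (α 0) ≤ U s := by
        rw [div_le_iff₀ hP]; linarith
      have hmono : (1/(s:ℝ)^(α 0)) * (L s - 2*(1/(s:ℝ))^N)
          ≤ (1/(s:ℝ)^(α 0)) * F s (fun n => α (n+1)) :=
        mul_le_mul_of_nonneg_left ih1 (by positivity)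
      have e : -(α 0 : ℝ)/(s:ℝ)^(α 0) - (1/(s:ℝ)^(α 0)) * (L s - 2*(1/(s:ℝ))^N)
          = (-(α 0 : ℝ) - L s)/(s:ℝ)^(α 0) + 2*(1/(s:ℝ))^N / (s:ℝ)^(α 0) := by
        ring
      rw [hrec]
      linarith

lemma F_mem (hs : 2 < s) {α : ℕ → ℕ} (hα : Adm s α) : L s ≤ F s α ∧ F s α ≤ U s := by
  have hs0 : (0:ℝ) < s := hs_pos hs
  have hq0 : (0:ℝ) ≤ 1/(s:ℝ) := by positivity
  have hq1 : 1/(s:ℝ) < 1 := by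
    rw [div_lt_one hs0]; linarith [hsR hs]
  have ht : Tendsto (fun N : ℕ => (1/(s:ℝ))^N) atTop (𝓝 0) :=
    tendsto_pow_atTop_nhds_zero_of_lt_one hq0 hq1
  constructor
  · have ht2 : Tendsto (fun N : ℕ => L s - 2*(1/(s:ℝ))^N) atTop (𝓝 (L s)) := by
      have h2 := ht.const_mul (2:ℝ)
      have := (tendsto_const_nhds (x := L s) (f := atTop)).sub h2
      simpa using this
    exact le_of_tendsto' ht2 (fun N => (bounds_aux hs N α hα).1)
  · have ht2 : Tendsto (fun N : ℕ => U s + 2*(1/(s:ℝ))^N) atTop (𝓝 (U s)) := by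
      have h2 := ht.const_mul (2:ℝ)
      have := (tendsto_const_nhds (x := U s) (f := atTop)).add h2
      simpa using this
    exact ge_of_tendsto' ht2 (fun N => (bounds_aux hs N α hα).2)

def alo (s : ℕ) : ℕ → ℕ := fun n => if n % 2 = 0 then 1 else s - 1
def ahi (s : ℕ) : ℕ → ℕ := fun n => if n % 2 = 0 then s - 1 else 1

lemma alo_adm (hs : 2 < s) : Adm s (alo s) := by
  intro n; unfold alo; split <;> omega

lemma ahi_adm (hs : 2 < s) : Adm s (ahi s) := by
  intro n; unfold ahi; split <;> omega

lemma shift_alo : (fun n => alo s (n+1)) = ahi s := by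
  funext n
  rcases Nat.mod_two_eq_zero_or_one n with h | h
  · have h2 : (n+1) % 2 = 1 := by omega
    simp [alo, ahi, h, h2]
  · have h2 : (n+1) % 2 = 0 := by omega
    simp [alo, ahi, h, h2]

lemma shift_ahi : (fun n => ahi s (n+1)) = alo s := by
  funext n
  rcases Nat.mod_two_eq_zero_or_one n with h | h
  · have h2 : (n+1) % 2 = 1 := by omega
    simp [alo, ahi, h, h2]
  · have h2 : (n+1) % 2 = 0 := by omega
    simp [alo, ahi, h, h2]

lemma F_extremal (hs : 2 < s) : F s (alo s) = L s ∧ F s (ahi s) = U s := by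
  have hd := hD hs
  have he1 := e1 hs
  have hs0 : (0:ℝ) < s := hs_pos hs
  have hXpos : (0:ℝ) < (s:ℝ)^(s-1) := by positivity
  have e1' := F_rec hs (alo_adm hs)
  rw [shift_alo] at e1'
  have e2' := F_rec hs (ahi_adm hs)
  rw [shift_ahi] at e2'
  have ha0 : alo s 0 = 1 := rfl
  have hb0 : ahi s 0 = s - 1 := rfl
  rw [ha0] at e1'
  rw [hb0] at e2'
  have hcast : (((s-1:ℕ)):ℝ) = (s:ℝ) - 1 := by
    have h1' : 1 ≤ s := by omega
    push_cast [Nat.cast_sub h1']; ring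
  rw [hcast] at e2'
  set x := F s (alo s) with hx
  set y := F s (ahi s) with hy
  set X := (s:ℝ)^(s-1) with hX
  -- e1' : x = -(1:ℕ)/s^1 - (1/s^1) * y
  -- e2' : y = -((s:ℝ)-1)/X - (1/X) * x
  have q1 : (s:ℝ) * x = -1 - y := by
    rw [e1']
    push_cast
    field_simp
  have q2 : X * y = -((s:ℝ)-1) - x := by
    rw [e2']
    field_simp
  have q3 : x * ((s:ℝ)*X - 1) = -X + (s:ℝ) - 1 := by
    have q1X : X * ((s:ℝ) * x) = X * (-1 - y) := by rw [q1]
    nlinarith [q1X, q2]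
  constructor
  · rw [L, eq_div_iff hd.ne', he1, ← hX]
    linear_combination q3
  · rw [U, eq_div_iff hd.ne', he1]
    linear_combination ((s:ℝ)*X - 1) * q1 - s * q3

end Stmt10

/-- The set `S⁻` of sums `∑ (-1)ⁿ αₙ / s^(α₁+⋯+αₙ)` over digit sequences with values in
`{1,…,s-1}` (the `n`-th term, counting from `1`, carries sign `(-1)ⁿ`). -/
def Sneg (s : ℕ) : Set ℝ :=
  {x : ℝ | ∃ α : ℕ → ℕ, (∀ n, 1 ≤ α n ∧ α n ≤ s - 1) ∧
    x = ∑' n : ℕ, (-1 : ℝ) ^ (n + 1) * (α n : ℝ) / (s : ℝ) ^ (∑ k ∈ Finset.range (n + 1), α k)}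

open Stmt10 in
/-- `inf S⁻ = (-s^{s-1} + s - 1)/(s^s - 1)` and `sup S⁻ = (-s² + s + 1)/(s^s - 1)`. -/
theorem stmt10 (s : ℕ) (hs : 2 < s) :
    sInf (Sneg s) = (-(s : ℝ) ^ (s - 1) + s - 1) / ((s : ℝ) ^ s - 1) ∧
      sSup (Sneg s) = (-(s : ℝ) ^ 2 + s + 1) / ((s : ℝ) ^ s - 1) := by
  obtain ⟨hlo, hhi⟩ := F_extremal hs
  have hlow : ∀ x ∈ Sneg s, L s ≤ x := by
    rintro x ⟨α, hα, rfl⟩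
    exact (F_mem hs hα).1
  have hup : ∀ x ∈ Sneg s, x ≤ U s := by
    rintro x ⟨α, hα, rfl⟩
    exact (F_mem hs hα).2
  have hmemL : L s ∈ Sneg s := ⟨alo s, alo_adm hs, hlo.symm⟩
  have hmemU : U s ∈ Sneg s := ⟨ahi s, ahi_adm hs, hhi.symm⟩
  have hne : (Sneg s).Nonempty := ⟨L s, hmemL⟩
  constructor
  · show sInf (Sneg s) = L s
    exact le_antisymm (csInf_le ⟨L s, fun x hx => hlow x hx⟩ hmemL) (le_csInf hne hlow)
  · show sSup (Sneg s) = U s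
    exact le_antisymm (csSup_le hne hup) (le_csSup ⟨U s, fun x hx => hup x hx⟩ hmemU)
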